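/- Let C be a category with finite coproducts and kernel pairs, and let F : C → C be a functor that weakly preserves kernel pairs (it sends every kernel pair diagram to a weak pullback). Then F weakly preserves pullbacks of retractions: if f₁ : A₁ → C' and f₂ : A₂ → C' are split epimorphisms (retractions) and (P, p₁, p₂) is their pullback, then (F P, F p₁, F p₂) is a weak pullback of F f₁ and F f₂. -/

import Mathlib

open CategoryTheory

/-- Theorem 4 (Gumm): in a category with finite coproducts and kernel pairs, a functor
that weakly preserves kernel pairs weakly preserves pullbacks of retractions
(split epimorphisms). -/
theorem weakly_preserves_pullbacks_of_retractions
    {C : Type*} [Category C] [Limits.HasBinaryCoproducts C]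
    (hker : ∀ {X Y : C} (f : X ⟶ Y), Limits.HasPullback f f)
    (F : C ⥤ C)
    -- `F` weakly preserves kernel pairs: every kernel-pair diagram (a pullback of `f`
    -- with itself) is sent to a weak pullback.
    (hF : ∀ {X Y K : C} (f : X ⟶ Y) (π₁ π₂ : K ⟶ X),
      π₁ ≫ f = π₂ ≫ f →
      (∀ {Q : C} (q₁ q₂ : Q ⟶ X), q₁ ≫ f = q₂ ≫ f →
        ∃! q : Q ⟶ K, q ≫ π₁ = q₁ ∧ q ≫ π₂ = q₂) →
      ∀ {Q : C} (u₁ u₂ : Q ⟶ F.obj X), u₁ ≫ F.map f = u₂ ≫ F.map f →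
        ∃ w : Q ⟶ F.obj K, w ≫ F.map π₁ = u₁ ∧ w ≫ F.map π₂ = u₂)
    -- a pullback `(P, p₁, p₂)` of retractions `f₁`, `f₂`:
    {A₁ A₂ C' P : C} (f₁ : A₁ ⟶ C') (f₂ : A₂ ⟶ C')
    (g₁ : C' ⟶ A₁) (g₂ : C' ⟶ A₂) (hg₁ : g₁ ≫ f₁ = 𝟙 C') (hg₂ : g₂ ≫ f₂ = 𝟙 C')
    (p₁ : P ⟶ A₁) (p₂ : P ⟶ A₂) (hcomm : p₁ ≫ f₁ = p₂ ≫ f₂)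
    (huniv : ∀ {Q : C} (q₁ : Q ⟶ A₁) (q₂ : Q ⟶ A₂), q₁ ≫ f₁ = q₂ ≫ f₂ →
      ∃! q : Q ⟶ P, q ≫ p₁ = q₁ ∧ q ≫ p₂ = q₂) :
    -- then `(F P, F p₁, F p₂)` is a weak pullback of `F f₁` and `F f₂`:
    F.map p₁ ≫ F.map f₁ = F.map p₂ ≫ F.map f₂ ∧
      ∀ {Q : C} (u₁ : Q ⟶ F.obj A₁) (u₂ : Q ⟶ F.obj A₂),
        u₁ ≫ F.map f₁ = u₂ ≫ F.map f₂ →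
          ∃ w : Q ⟶ F.obj P, w ≫ F.map p₁ = u₁ ∧ w ≫ F.map p₂ = u₂ := by
  constructor
  · rw [← F.map_comp, hcomm, F.map_comp]
  · intro Q u₁ u₂ hu
    -- set up the coproduct and the combined map f
    set A := Limits.coprod A₁ A₂ with hA
    set f : A ⟶ C' := Limits.coprod.desc f₁ f₂ with hf
    haveI := hker f
    set K := Limits.pullback f f with hK
    set π₁ : K ⟶ A := Limits.pullback.fst f f with hπ₁
    set π₂ : K ⟶ A := Limits.pullback.snd f f with hπ₂
    have hπ : π₁ ≫ f = π₂ ≫ f := Limits.pullback.condition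
    have hKuniv : ∀ {Q : C} (q₁ q₂ : Q ⟶ A), q₁ ≫ f = q₂ ≫ f →
        ∃! q : Q ⟶ K, q ≫ π₁ = q₁ ∧ q ≫ π₂ = q₂ := by
      intro Q q₁ q₂ h
      refine ⟨Limits.pullback.lift q₁ q₂ h, ⟨Limits.pullback.lift_fst _ _ _,
        Limits.pullback.lift_snd _ _ _⟩, ?_⟩
      rintro y ⟨h1, h2⟩
      apply Limits.pullback.hom_ext
      · exact h1.trans (Limits.pullback.lift_fst _ _ _).symm
      · exact h2.trans (Limits.pullback.lift_snd _ _ _).symm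
    -- the retraction maps h₁ : A ⟶ A₁, h₂ : A ⟶ A₂
    set h₁ : A ⟶ A₁ := Limits.coprod.desc (𝟙 A₁) (f₂ ≫ g₁) with hh₁
    set h₂ : A ⟶ A₂ := Limits.coprod.desc (f₁ ≫ g₂) (𝟙 A₂) with hh₂
    have hh₁f : h₁ ≫ f₁ = f := by
      apply Limits.coprod.hom_ext <;> simp [hh₁, hf, Category.assoc, hg₁]
    have hh₂f : h₂ ≫ f₂ = f := by
      apply Limits.coprod.hom_ext <;> simp [hh₂, hf, Category.assoc, hg₂]
    -- r : K ⟶ P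
    have hrcond : (π₁ ≫ h₁) ≫ f₁ = (π₂ ≫ h₂) ≫ f₂ := by
      rw [Category.assoc, hh₁f, Category.assoc, hh₂f, hπ]
    obtain ⟨r, ⟨hr₁, hr₂⟩, -⟩ := huniv (π₁ ≫ h₁) (π₂ ≫ h₂) hrcond
    -- apply hF to the factorization problem
    have hu' : (u₁ ≫ F.map Limits.coprod.inl) ≫ F.map f
        = (u₂ ≫ F.map Limits.coprod.inr) ≫ F.map f := by
      rw [Category.assoc, Category.assoc, ← F.map_comp, ← F.map_comp]
      simp only [hf, Limits.coprod.inl_desc, Limits.coprod.inr_desc]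
      exact hu
    obtain ⟨w, hw₁, hw₂⟩ := hF f π₁ π₂ hπ hKuniv _ _ hu'
    refine ⟨w ≫ F.map r, ?_, ?_⟩
    · rw [Category.assoc, ← F.map_comp, hr₁, F.map_comp, ← Category.assoc, hw₁,
        Category.assoc, ← F.map_comp]
      rw [hh₁, Limits.coprod.inl_desc, F.map_id, Category.comp_id]
    · rw [Category.assoc, ← F.map_comp, hr₂, F.map_comp, ← Category.assoc, hw₂,
        Category.assoc, ← F.map_comp]
      rw [hh₂, Limits.coprod.inr_desc, F.map_id, Category.comp_id]
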